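/- Let $\xi : [0,1] \to \mathbb{R}^2$ satisfy $\|\xi_\tau\| \equiv L > 0$ (constant speed) and $\|\xi_\tau(a) - \xi_\tau(b)\| \le \bar\sigma|a-b|$. Let $G$ be an $(h,l)$-dense digraph in a convex set containing the range of $\xi$, with $l > 0$, and let $\xi_R$ be the polygonal rounding of $\xi$: with $n = \lceil L/l \rceil$ and grid points $\tau_i = i/n$, choose vertices $v_i \in V$ with $\|v_i - \xi(\tau_i)\| \le h$, and let $\xi_R$ linearly interpolate the $v_i$. Then $\|\xi_R - \xi\|_{L^\infty([0,1])} \le \frac{\bar\sigma l^2}{8 L^2} + h$. -/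

import Mathlib

open MeasureTheory intervalIntegral

lemma taylor_aux (σ : ℝ) (hσ : 0 ≤ σ) (f f' : ℝ → EuclideanSpace ℝ (Fin 2))
    (hd : ∀ τ ∈ Set.Icc (0:ℝ) 1, HasDerivAt f (f' τ) τ)
    (hlip : ∀ a ∈ Set.Icc (0:ℝ) 1, ∀ b ∈ Set.Icc (0:ℝ) 1, ‖f' a - f' b‖ ≤ σ * |a - b|)
    (c x : ℝ) (hc : c ∈ Set.Icc (0:ℝ) 1) (hx : x ∈ Set.Icc (0:ℝ) 1) :
    ‖f x - f c - (x - c) • f' c‖ ≤ σ * (x - c)^2 / 2 := by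
  have hsub : Set.uIcc c x ⊆ Set.Icc 0 1 := Set.uIcc_subset_Icc hc hx
  have hcont : ContinuousOn f' (Set.Icc (0:ℝ) 1) := by
    have hL : LipschitzOnWith σ.toNNReal f' (Set.Icc (0:ℝ) 1) := by
      rw [lipschitzOnWith_iff_dist_le_mul]
      intro p hp q hq
      have := hlip p hp q hq
      simpa [dist_eq_norm, Real.coe_toNNReal σ hσ, Real.dist_eq] using this
    exact hL.continuousOn
  have hint : IntervalIntegrable f' volume c x :=
    (hcont.mono hsub).intervalIntegrable
  have hftc : (∫ s in c..x, f' s) = f x - f c :=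
    integral_eq_sub_of_hasDerivAt (fun s hs => hd s (hsub hs)) hint
  have heq : f x - f c - (x - c) • f' c = ∫ s in c..x, (f' s - f' c) := by
    rw [intervalIntegral.integral_sub hint intervalIntegrable_const, hftc,
      intervalIntegral.integral_const]
  rw [heq]
  rcases le_total c x with hcx | hxc
  · have hb : ∀ᵐ s ∂volume.restrict (Set.uIoc c x), ‖f' s - f' c‖ ≤ σ * (s - c) := by
      rw [Set.uIoc_of_le hcx]
      refine (ae_restrict_iff' measurableSet_Ioc).mpr (Filter.Eventually.of_forall ?_)
      intro s hs
      have hs01 : s ∈ Set.Icc (0:ℝ) 1 := ⟨le_trans hc.1 hs.1.le, le_trans hs.2 hx.2⟩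
      have := hlip s hs01 c hc
      rwa [abs_of_nonneg (by linarith [hs.1.le] : (0:ℝ) ≤ s - c)] at this
    have hgint : IntervalIntegrable (fun s => σ * (s - c)) volume c x :=
      (Continuous.intervalIntegrable (by continuity) _ _)
    have hle := intervalIntegral.norm_integral_le_abs_of_norm_le hb hgint
    have hval : (∫ s in c..x, σ * (s - c)) = σ * (x - c)^2 / 2 := by
      rw [intervalIntegral.integral_const_mul]
      have h1 : (∫ s in c..x, (s - c)) = (x - c)^2/2 := by
        rw [intervalIntegral.integral_sub intervalIntegrable_id intervalIntegrable_const,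
          integral_id, intervalIntegral.integral_const, smul_eq_mul]
        ring
      rw [h1]; ring
    rw [hval, abs_of_nonneg (by positivity)] at hle
    exact hle
  · have hb : ∀ᵐ s ∂volume.restrict (Set.uIoc c x), ‖f' s - f' c‖ ≤ σ * (c - s) := by
      rw [Set.uIoc_of_ge hxc]
      refine (ae_restrict_iff' measurableSet_Ioc).mpr (Filter.Eventually.of_forall ?_)
      intro s hs
      have hs01 : s ∈ Set.Icc (0:ℝ) 1 := ⟨le_trans hx.1 hs.1.le, le_trans hs.2 hc.2⟩
      have := hlip s hs01 c hc
      rwa [abs_of_nonpos (by linarith [hs.2] : s - c ≤ 0), neg_sub] at this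
    have hgint : IntervalIntegrable (fun s => σ * (c - s)) volume c x :=
      (Continuous.intervalIntegrable (by continuity) _ _)
    have hle := intervalIntegral.norm_integral_le_abs_of_norm_le hb hgint
    have hval : (∫ s in c..x, σ * (c - s)) = -(σ * (x - c)^2 / 2) := by
      rw [intervalIntegral.integral_const_mul]
      have h1 : (∫ s in c..x, (c - s)) = -((x - c)^2/2) := by
        rw [intervalIntegral.integral_sub intervalIntegrable_const intervalIntegrable_id,
          integral_id, intervalIntegral.integral_const, smul_eq_mul]
        ring
      rw [h1]; ring
    rw [hval, abs_neg, abs_of_nonneg (by positivity)] at hle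
    exact hle

set_option maxHeartbeats 1000000 in
theorem rounded_path_distance_error
    (Ω : Set (EuclideanSpace ℝ (Fin 2))) (hΩ : Convex ℝ Ω)
    (V : Set (EuclideanSpace ℝ (Fin 2)))
    (E : EuclideanSpace ℝ (Fin 2) → EuclideanSpace ℝ (Fin 2) → Prop)
    (h l : ℝ) (hh : 0 ≤ h) (hl : 0 < l)
    (containment : V ⊆ Ω)
    (density : ∀ p ∈ Ω, ∃ v ∈ V, ‖p - v‖ ≤ h)
    (connectivity : ∀ v ∈ V, ∀ u ∈ V, ‖v - u‖ ≤ l + 2 * h → E v u)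
    (ξ ξ' : ℝ → EuclideanSpace ℝ (Fin 2)) (L σ : ℝ) (hL : 0 < L)
    (hrange : ∀ τ ∈ Set.Icc (0:ℝ) 1, ξ τ ∈ Ω)
    (hd : ∀ τ ∈ Set.Icc (0:ℝ) 1, HasDerivAt ξ (ξ' τ) τ)
    (hspeed : ∀ τ ∈ Set.Icc (0:ℝ) 1, ‖ξ' τ‖ = L)
    (hlip : ∀ a ∈ Set.Icc (0:ℝ) 1, ∀ b ∈ Set.Icc (0:ℝ) 1,
      ‖ξ' a - ξ' b‖ ≤ σ * |a - b|)
    (n : ℕ) (hn : n = ⌈L / l⌉₊)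
    (v : ℕ → EuclideanSpace ℝ (Fin 2))
    (hv : ∀ i ≤ n, v i ∈ V ∧ ‖v i - ξ ((i : ℝ) / n)‖ ≤ h)
    (ξR : ℝ → EuclideanSpace ℝ (Fin 2))
    (hR : ∀ τ : ℝ, ξR τ =
      v (⌊(n : ℝ) * τ⌋).toNat +
        ((n : ℝ) * τ - (⌊(n : ℝ) * τ⌋ : ℝ)) •
          (v (⌈(n : ℝ) * τ⌉).toNat - v (⌊(n : ℝ) * τ⌋).toNat)) :
    ∀ τ ∈ Set.Icc (0:ℝ) 1, ‖ξR τ - ξ τ‖ ≤ σ * l ^ 2 / (8 * L ^ 2) + h := by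
  have hσ : 0 ≤ σ := by
    have h1 := hlip 0 (by norm_num) 1 (by norm_num)
    have h2 := norm_nonneg (ξ' 0 - ξ' 1)
    simp only [zero_sub, abs_neg, abs_one, mul_one] at h1
    linarith
  intro τ hτ
  obtain ⟨hτ0, hτ1⟩ := hτ
  have hn1 : 0 < n := by rw [hn]; exact Nat.ceil_pos.mpr (div_pos hL hl)
  have hN : (0:ℝ) < n := Nat.cast_pos.mpr hn1
  set x := (n:ℝ) * τ with hxdef
  have hx0 : 0 ≤ x := mul_nonneg hN.le hτ0
  have hxn : x ≤ n := by
    calc x ≤ (n:ℝ) * 1 := by apply mul_le_mul_of_nonneg_left hτ1 hN.le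
    _ = n := mul_one _
  have hfl0 : 0 ≤ ⌊x⌋ := Int.floor_nonneg.mpr hx0
  have hcl0 : 0 ≤ ⌈x⌉ := Int.ceil_nonneg hx0
  set i := (⌊x⌋).toNat with hidef
  set j := (⌈x⌉).toNat with hjdef
  have hi : (i:ℝ) = (⌊x⌋ : ℝ) := by
    rw [hidef]; exact_mod_cast congrArg (Int.cast : ℤ → ℝ) (Int.toNat_of_nonneg hfl0)
  have hj : (j:ℝ) = (⌈x⌉ : ℝ) := by
    rw [hjdef]; exact_mod_cast congrArg (Int.cast : ℤ → ℝ) (Int.toNat_of_nonneg hcl0)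
  have hin : i ≤ n := by
    have h1 : ((⌊x⌋:ℤ):ℝ) ≤ (n:ℝ) := (Int.floor_le x).trans hxn
    have h2 : ⌊x⌋ ≤ (n:ℤ) := by exact_mod_cast h1
    omega
  have hjn : j ≤ n := by
    have : ⌈x⌉ ≤ (n:ℤ) := by
      rw [Int.ceil_le]; exact_mod_cast hxn
    omega
  set t := x - ((⌊x⌋:ℤ) : ℝ) with htdef
  have ht0 : 0 ≤ t := sub_nonneg.mpr (Int.floor_le x)
  have ht1 : t ≤ 1 := by
    have := Int.lt_floor_add_one x
    simp only [htdef]; linarith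
  set a := (i:ℝ)/n with hadef
  set b := (j:ℝ)/n with hbdef
  have hτa : τ - a = t / n := by
    rw [hadef, hi, htdef, eq_div_iff hN.ne', sub_mul, div_mul_cancel₀ _ hN.ne', hxdef]
    ring
  have ha0 : 0 ≤ a := by positivity
  have haτ : a ≤ τ := by
    have : 0 ≤ t / (n:ℝ) := by positivity
    linarith [hτa]
  have hbτ' : b - τ = (((⌈x⌉:ℤ):ℝ) - x) / n := by
    rw [hbdef, hj, eq_div_iff hN.ne', sub_mul, div_mul_cancel₀ _ hN.ne', hxdef]
    ring
  have hbτ0 : 0 ≤ b - τ := by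
    rw [hbτ']
    exact div_nonneg (by linarith [Int.le_ceil x]) hN.le
  have hτb : τ ≤ b := by linarith
  have hb1 : b ≤ 1 := by
    rw [hbdef, div_le_one hN]
    exact_mod_cast Nat.cast_le.mpr hjn
  have ha1 : a ≤ 1 := le_trans haτ hτ1
  have hτ01 : τ ∈ Set.Icc (0:ℝ) 1 := ⟨hτ0, hτ1⟩
  have hcf : ((⌈x⌉:ℤ):ℝ) ≤ ((⌊x⌋:ℤ):ℝ) + 1 := by
    exact_mod_cast Int.ceil_le_floor_add_one x
  have hbτle : b - τ ≤ (1 - t) / n := by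
    rw [hbτ']
    have h1 : ((⌈x⌉:ℤ):ℝ) - x ≤ 1 - t := by rw [htdef]; linarith
    have h2 : (0:ℝ) < n := hN
    gcongr
  -- scalar cancellation identity
  have hc : (1-t)*(a-τ) + t*(b-τ) = 0 := by
    rcases eq_or_lt_of_le ht0 with h0 | h0
    · have haeq : τ - a = 0 := by rw [hτa, ← h0]; simp
      rw [← h0]
      have : a - τ = 0 := by linarith
      rw [this]; ring
    · have hceq : (⌈x⌉ : ℤ) = ⌊x⌋ + 1 := by
        have hlt : ((⌊x⌋:ℤ):ℝ) < x := by rw [htdef] at h0; linarith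
        have h1 : ⌊x⌋ + 1 ≤ ⌈x⌉ := by
          have hlt2 : ((⌊x⌋:ℤ):ℝ) < ((⌈x⌉:ℤ):ℝ) := lt_of_lt_of_le hlt (Int.le_ceil x)
          have : (⌊x⌋:ℤ) < ⌈x⌉ := by exact_mod_cast hlt2
          omega
        have h2 := Int.ceil_le_floor_add_one x
        omega
      have hbeq : b - τ = (1 - t)/n := by
        rw [hbτ', htdef]
        have : ((⌈x⌉:ℤ):ℝ) = ((⌊x⌋:ℤ):ℝ) + 1 := by exact_mod_cast hceq
        rw [this]; ring_nf
      have haeq : a - τ = -(t/n) := by linarith [hτa]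
      rw [hbeq, haeq]; field_simp; ring
  -- Taylor estimates
  have ha01 : a ∈ Set.Icc (0:ℝ) 1 := ⟨ha0, ha1⟩
  have hb01 : b ∈ Set.Icc (0:ℝ) 1 := ⟨le_trans hτ0 hτb, hb1⟩
  have T1 : ‖ξ a - ξ τ - (a - τ) • ξ' τ‖ ≤ σ * (a - τ)^2 / 2 :=
    taylor_aux σ hσ ξ ξ' hd hlip τ a hτ01 ha01
  have T2 : ‖ξ b - ξ τ - (b - τ) • ξ' τ‖ ≤ σ * (b - τ)^2 / 2 :=
    taylor_aux σ hσ ξ ξ' hd hlip τ b hτ01 hb01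
  have hvi := (hv i hin).2
  have hvj := (hv j hjn).2
  rw [← hadef] at hvi
  rw [← hbdef] at hvj
  -- key algebraic identity
  have hid : ξR τ - ξ τ = ((1-t) • (v i - ξ a) + t • (v j - ξ b))
      + ((1-t) • (ξ a - ξ τ - (a-τ) • ξ' τ) + t • (ξ b - ξ τ - (b-τ) • ξ' τ)) := by
    have hz : ((1-t)*(a-τ)) • ξ' τ + (t*(b-τ)) • ξ' τ = (0 : EuclideanSpace ℝ (Fin 2)) := by
      rw [← add_smul, hc, zero_smul]
    have hexp : ((1-t) • (v i - ξ a) + t • (v j - ξ b))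
        + ((1-t) • (ξ a - ξ τ - (a-τ) • ξ' τ) + t • (ξ b - ξ τ - (b-τ) • ξ' τ))
        = (v i + t • (v j - v i) - ξ τ)
          - (((1-t)*(a-τ)) • ξ' τ + (t*(b-τ)) • ξ' τ) := by
      module
    rw [hexp, hz, sub_zero, hR τ, ← hxdef, ← hidef, ← hjdef, ← htdef]
  have h1t : 0 ≤ 1 - t := by linarith
  have hbound1 : ‖(1-t) • (v i - ξ a) + t • (v j - ξ b)‖ ≤ h := by
    calc ‖(1-t) • (v i - ξ a) + t • (v j - ξ b)‖
        ≤ ‖(1-t) • (v i - ξ a)‖ + ‖t • (v j - ξ b)‖ := norm_add_le _ _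
      _ = (1-t) * ‖v i - ξ a‖ + t * ‖v j - ξ b‖ := by
          rw [norm_smul, norm_smul, Real.norm_eq_abs, Real.norm_eq_abs,
            abs_of_nonneg h1t, abs_of_nonneg ht0]
      _ ≤ (1-t) * h + t * h :=
          add_le_add (mul_le_mul_of_nonneg_left hvi h1t)
            (mul_le_mul_of_nonneg_left hvj ht0)
      _ = h := by ring
  set m := (n:ℝ) with hmdef
  have hLm : L ≤ m * l := by
    have h1 : L / l ≤ (⌈L / l⌉₊ : ℝ) := Nat.le_ceil (L / l)
    rw [← hn] at h1
    rw [← div_le_iff₀ hl] at *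
    exact h1.trans_eq rfl
  have haneg : a - τ = -(t/m) := by rw [hmdef]; linarith [hτa]
  have hAe : (a-τ)^2 = (t/m)^2 := by rw [haneg]; ring
  have hBe : (b-τ)^2 ≤ ((1-t)/m)^2 := pow_le_pow_left₀ hbτ0 hbτle 2
  have hbound2 : ‖(1-t) • (ξ a - ξ τ - (a-τ) • ξ' τ) + t • (ξ b - ξ τ - (b-τ) • ξ' τ)‖
      ≤ σ * l^2 / (8 * L^2) := by
    calc ‖(1-t) • (ξ a - ξ τ - (a-τ) • ξ' τ) + t • (ξ b - ξ τ - (b-τ) • ξ' τ)‖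
        ≤ ‖(1-t) • (ξ a - ξ τ - (a-τ) • ξ' τ)‖ + ‖t • (ξ b - ξ τ - (b-τ) • ξ' τ)‖ :=
          norm_add_le _ _
      _ = (1-t) * ‖ξ a - ξ τ - (a-τ) • ξ' τ‖ + t * ‖ξ b - ξ τ - (b-τ) • ξ' τ‖ := by
          rw [norm_smul, norm_smul, Real.norm_eq_abs, Real.norm_eq_abs,
            abs_of_nonneg h1t, abs_of_nonneg ht0]
      _ ≤ (1-t) * (σ * (a-τ)^2 / 2) + t * (σ * (b-τ)^2 / 2) :=
          add_le_add (mul_le_mul_of_nonneg_left T1 h1t)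
            (mul_le_mul_of_nonneg_left T2 ht0)
      _ ≤ (1-t) * (σ * (t/m)^2 / 2) + t * (σ * ((1-t)/m)^2 / 2) := by
          rw [hAe]
          refine add_le_add le_rfl (mul_le_mul_of_nonneg_left ?_ ht0)
          have := mul_le_mul_of_nonneg_left hBe hσ
          linarith
      _ = σ * (t*(1-t)) / (2*m^2) := by
          have hm0 : m ≠ 0 := by positivity
          field_simp
          ring
      _ ≤ σ * (1/4) / (2*m^2) := by
          have h4 : t*(1-t) ≤ 1/4 := by nlinarith [sq_nonneg (2*t-1)]
          gcongr
      _ = σ / (8*m^2) := by ring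
      _ ≤ σ * l^2 / (8 * L^2) := by
          rw [div_le_div_iff₀ (by positivity) (by positivity)]
          have hsq : L^2 ≤ (m*l)^2 := by nlinarith [hL.le]
          nlinarith [mul_le_mul_of_nonneg_left hsq hσ]
  rw [hid]
  calc ‖((1-t) • (v i - ξ a) + t • (v j - ξ b))
      + ((1-t) • (ξ a - ξ τ - (a-τ) • ξ' τ) + t • (ξ b - ξ τ - (b-τ) • ξ' τ))‖
      ≤ ‖(1-t) • (v i - ξ a) + t • (v j - ξ b)‖
        + ‖(1-t) • (ξ a - ξ τ - (a-τ) • ξ' τ) + t • (ξ b - ξ τ - (b-τ) • ξ' τ)‖ :=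
      norm_add_le _ _
    _ ≤ σ * l ^ 2 / (8 * L ^ 2) + h := by linarith
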